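/- arXiv:2103.02628 — 3 statements merged into one kernel-verified Lean document; each statement's English description precedes it below -/
import Mathlib

section
/- Non-negativity of entropy production implies positivity constraints: if for all E, g ∈ ℝ² the quantity (1/T) Eᵀ σ E + (1/T²) gᵀ κ g − (2/T) Eᵀ ν^S g ≥ 0 (with T > 0), then σ^S and κ^S are positive semi-definite, and moreover if σ^S = 0 then ν^S = 0. -/
open scoped ComplexOrder

open Matrix

lemma quad_transpose (A : Matrix (Fin 2) (Fin 2) ℝ) (x : Fin 2 → ℝ) :
    x ⬝ᵥ Aᵀ *ᵥ x = x ⬝ᵥ A *ᵥ x := by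
  rw [mulVec_transpose, dotProduct_comm, dotProduct_mulVec]

lemma lin_nonneg (a c : ℝ) (h : ∀ t : ℝ, 0 ≤ c - t * a) : a = 0 := by
  by_contra ha
  have := h ((c + 1) / a)
  field_simp at this
  nlinarith

/-- Non-negativity of the entropy production rate implies that the symmetric parts `σ^S`
and `κ^S` are positive semi-definite, and if `σ^S = 0` then `ν^S = 0`. -/
theorem entropy_production_nonneg_constraints (σ κ ν : Matrix (Fin 2) (Fin 2) ℝ)
    (T : ℝ) (hT : 0 < T)
    (hpos : ∀ E g : Fin 2 → ℝ,
      0 ≤ (1 / T) * (E ⬝ᵥ σ *ᵥ E) + (1 / T ^ 2) * (g ⬝ᵥ κ *ᵥ g)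
        - (2 / T) * (E ⬝ᵥ ((2 : ℝ)⁻¹ • (ν + νᵀ)) *ᵥ g)) :
    ((2 : ℝ)⁻¹ • (σ + σᵀ)).PosSemidef ∧ ((2 : ℝ)⁻¹ • (κ + κᵀ)).PosSemidef ∧
      ((2 : ℝ)⁻¹ • (σ + σᵀ) = 0 → (2 : ℝ)⁻¹ • (ν + νᵀ) = 0) := by
  have hσ : ∀ x : Fin 2 → ℝ, 0 ≤ x ⬝ᵥ σ *ᵥ x := by
    intro x
    have h := hpos x 0
    simp only [mulVec_zero, dotProduct_zero, mul_zero, add_zero, sub_zero] at h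
    have hT' : 0 < 1 / T := by positivity
    nlinarith [h, hT']
  have hκ : ∀ x : Fin 2 → ℝ, 0 ≤ x ⬝ᵥ κ *ᵥ x := by
    intro x
    have h := hpos 0 x
    simp only [mulVec_zero, dotProduct_zero, zero_dotProduct, mul_zero, add_zero, zero_add,
      zero_sub, sub_zero, neg_nonneg, zero_mul] at h
    have hT' : 0 < 1 / T ^ 2 := by positivity
    nlinarith [h, hT']
  have symquad : ∀ (A : Matrix (Fin 2) (Fin 2) ℝ) (x : Fin 2 → ℝ),
      x ⬝ᵥ ((2 : ℝ)⁻¹ • (A + Aᵀ)) *ᵥ x = x ⬝ᵥ A *ᵥ x := by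
    intro A x
    rw [smul_mulVec, dotProduct_smul, add_mulVec, dotProduct_add, quad_transpose, smul_eq_mul]
    ring
  have herm : ∀ (A : Matrix (Fin 2) (Fin 2) ℝ), ((2 : ℝ)⁻¹ • (A + Aᵀ)).IsHermitian := by
    intro A
    unfold Matrix.IsHermitian
    have : ((2 : ℝ)⁻¹ • (A + Aᵀ))ᴴ = ((2 : ℝ)⁻¹ • (A + Aᵀ))ᵀ := by
      simp [conjTranspose, Matrix.map_id]
      rfl
    rw [this, transpose_smul, transpose_add, transpose_transpose, add_comm]
  refine ⟨posSemidef_iff_dotProduct_mulVec.mpr ⟨herm σ, ?_⟩,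
    posSemidef_iff_dotProduct_mulVec.mpr ⟨herm κ, ?_⟩, ?_⟩
  · intro x
    rw [star_trivial, symquad σ x]
    exact hσ x
  · intro x
    rw [star_trivial, symquad κ x]
    exact hκ x
  · intro hσS
    have hquad0 : ∀ x : Fin 2 → ℝ, x ⬝ᵥ σ *ᵥ x = 0 := by
      intro x
      have := symquad σ x
      rw [hσS] at this
      simpa using this.symm
    have key : ∀ E g : Fin 2 → ℝ, E ⬝ᵥ ((2 : ℝ)⁻¹ • (ν + νᵀ)) *ᵥ g = 0 := by
      intro E g
      have h : ∀ t : ℝ, 0 ≤ (1 / T ^ 2) * (g ⬝ᵥ κ *ᵥ g)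
          - t * ((2 / T) * (E ⬝ᵥ ((2 : ℝ)⁻¹ • (ν + νᵀ)) *ᵥ g)) := by
        intro t
        have := hpos (t • E) g
        rw [hquad0] at this
        rw [smul_dotProduct] at this
        simp only [smul_eq_mul, mul_zero, zero_add] at this
        linarith [this]
      have := lin_nonneg _ _ h
      have h2T : (2 / T) ≠ 0 := by positivity
      exact (mul_eq_zero.mp this).resolve_left h2T
    ext i j
    have := key (Pi.single i 1) (Pi.single j 1)
    simp only [mulVec_single, dotProduct_single, single_dotProduct, MulOpposite.op_one, one_smul,
      one_mul, Matrix.col_apply] at this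
    simp only [Matrix.smul_apply, Matrix.add_apply, Matrix.transpose_apply, Matrix.zero_apply,
      smul_eq_mul] at this ⊢
    linarith
end

section
/- Suppose E : I → ℝ, N : I → ℝ, μ ∈ ℝ, T > 0, and set h_i = E_i − μN_i. Let ρ be a diagonal density matrix with entries ρ_{ii} = e^{-h_i/T}/Z where Z = Σ_i e^{-h_i/T}, and let σ be a Hermitian density matrix with the same spectrum as ρ. Then Σ_i h_i σ_{ii} ≥ Σ_i h_i ρ_{ii}, i.e. ΔE − μ ΔN ≥ 0 where ΔE = Σ_i E_i(σ_{ii} − ρ_{ii}) and ΔN = Σ_i N_i(σ_{ii} − ρ_{ii}). -/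
open scoped ComplexOrder

open Matrix BigOperators

/-- Convexity key inequality: for `x, y > 0`,
`log x * (y - x) ≤ y * log y - x * log x + x - y`. -/
lemma edge_key_log_ineq (x y : ℝ) (hx : 0 < x) (hy : 0 < y) :
    Real.log x * (y - x) ≤ y * Real.log y - x * Real.log x + x - y := by
  have h1 : Real.log (x / y) ≤ x / y - 1 :=
    Real.log_le_sub_one_of_pos (div_pos hx hy)
  have h2 : y * Real.log (x / y) ≤ y * (x / y - 1) :=
    mul_le_mul_of_nonneg_left h1 hy.le
  rw [Real.log_div hx.ne' hy.ne'] at h2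
  have h3 : y * (x / y - 1) = x - y := by field_simp
  nlinarith [h2]

/-- Grand canonical free-energy inequality: if `ρ` is the Gibbs state with diagonal entries
`e^{-(E_i − μN_i)/T}/Z` and `σ = V ρ V†` for a unitary `V`, then
`Σ_i (E_i − μN_i) σ_{ii} ≥ Σ_i (E_i − μN_i) ρ_{ii}`, i.e. `ΔE − μΔN ≥ 0`. -/
theorem edge_free_energy_inequality {I : Type*} [Fintype I] [DecidableEq I]
    (E N : I → ℝ) (μ T : ℝ) (hT : 0 < T)
    (Z : ℝ) (hZ : Z = ∑ i, Real.exp (-(E i - μ * N i) / T))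
    (ρ : Matrix I I ℂ)
    (hρ : ρ = Matrix.diagonal fun i => ((Real.exp (-(E i - μ * N i) / T) / Z : ℝ) : ℂ))
    (σ : Matrix I I ℂ)
    (hσ : ∃ V : Matrix I I ℂ, V ∈ Matrix.unitaryGroup I ℂ ∧ σ = V * ρ * Vᴴ) :
    ∑ i, (E i - μ * N i) * (σ i i).re
      ≥ ∑ i, (E i - μ * N i) * (Real.exp (-(E i - μ * N i) / T) / Z) := by
  obtain ⟨V, hV, hσV⟩ := hσ
  rcases isEmpty_or_nonempty I with hI | hI
  · simp
  -- notation
  set h : I → ℝ := fun i => E i - μ * N i with hhdef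
  set q : I → ℝ := fun i => Real.exp (-(E i - μ * N i) / T) with hqdef
  have hq : ∀ i, 0 < q i := fun i => Real.exp_pos _
  have hZpos : 0 < Z := by
    rw [hZ]; exact Finset.sum_pos (fun i _ => Real.exp_pos _) Finset.univ_nonempty
  set B : I → I → ℝ := fun i j => Complex.normSq (V i j) with hBdef
  have hBnn : ∀ i j, 0 ≤ B i j := fun i j => Complex.normSq_nonneg _
  -- row sums of B are 1
  have hVV : V * Vᴴ = 1 := by
    have := Matrix.mem_unitaryGroup_iff.mp hV
    exact this
  have hVV' : Vᴴ * V = 1 := by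
    have := Matrix.mem_unitaryGroup_iff'.mp hV
    exact this
  have hrow : ∀ i, ∑ j, B i j = 1 := by
    intro i
    have h1 : (V * Vᴴ) i i = 1 := by rw [hVV]; simp
    rw [Matrix.mul_apply] at h1
    have h2 : ∑ j, V i j * (Vᴴ) j i = ∑ j, ((B i j : ℝ) : ℂ) := by
      refine Finset.sum_congr rfl fun j _ => ?_
      rw [Matrix.conjTranspose_apply, ← Complex.mul_conj]
      rfl
    rw [h2] at h1
    have := congrArg Complex.re h1
    simpa using this
  have hcol : ∀ j, ∑ i, B i j = 1 := by
    intro j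
    have h1 : (Vᴴ * V) j j = 1 := by rw [hVV']; simp
    rw [Matrix.mul_apply] at h1
    have h2 : ∑ i, (Vᴴ) j i * V i j = ∑ i, ((B i j : ℝ) : ℂ) := by
      refine Finset.sum_congr rfl fun i _ => ?_
      rw [Matrix.conjTranspose_apply, mul_comm, ← Complex.mul_conj]
      rfl
    rw [h2] at h1
    have := congrArg Complex.re h1
    simpa using this
  -- diagonal entries of σ
  have hσii : ∀ i, (σ i i).re = ∑ j, B i j * (q j / Z) := by
    intro i
    rw [hσV, hρ, Matrix.mul_apply]
    have h2 : ∑ j, (V * Matrix.diagonal fun k => ((Real.exp (-(E k - μ * N k) / T) / Z : ℝ) : ℂ)) i j * (Vᴴ) j i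
        = ∑ j, ((B i j * (q j / Z) : ℝ) : ℂ) := by
      refine Finset.sum_congr rfl fun j _ => ?_
      rw [Matrix.mul_diagonal, Matrix.conjTranspose_apply]
      have : V i j * ((Real.exp (-(E j - μ * N j) / T) / Z : ℝ) : ℂ) * star (V i j)
          = ((Real.exp (-(E j - μ * N j) / T) / Z : ℝ) : ℂ) * (V i j * star (V i j)) := by ring
      rw [this, show star (V i j) = (starRingEnd ℂ) (V i j) from rfl, Complex.mul_conj,
        ← Complex.ofReal_mul]
      congr 1
      simp only [hBdef, hqdef]
      ring
    rw [h2]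
    simp
  -- c t = q t * log (q t) - q t
  set c : I → ℝ := fun t => q t * Real.log (q t) - q t with hcdef
  have hhi : ∀ i, h i = -T * Real.log (q i) := by
    intro i
    simp only [hhdef, hqdef, Real.log_exp]
    field_simp
  -- pointwise inequality
  have hterm : ∀ i j,
      h i * (B i j * (q j / Z)) ≥
        B i j * (h i * (q i / Z)) + (-T / Z) * (B i j * (c j - c i)) := by
    intro i j
    have hK := edge_key_log_ineq (q i) (q j) (hq i) (hq j)
    have hnn : 0 ≤ B i j * (T / Z) :=
      mul_nonneg (hBnn i j) (div_nonneg hT.le hZpos.le)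
    have hK2 := mul_le_mul_of_nonneg_left hK hnn
    rw [hhi i]
    simp only [hcdef]
    have eq1 : (-T * Real.log (q i)) * (B i j * (q j / Z))
        - B i j * ((-T * Real.log (q i)) * (q i / Z))
        = -(B i j * (T / Z) * (Real.log (q i) * (q j - q i))) := by ring
    have eq2 : (-T / Z) * (B i j * ((q j * Real.log (q j) - q j) - (q i * Real.log (q i) - q i)))
        = -(B i j * (T / Z) * (q j * Real.log (q j) - q i * Real.log (q i) + q i - q j)) := by
      ring
    linarith [hK2, eq1, eq2]
  -- telescoping sum is zero
  have e1 : ∑ i, ∑ j, B i j * c j = ∑ t, c t := by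
    rw [Finset.sum_comm]
    refine Finset.sum_congr rfl fun j _ => ?_
    rw [← Finset.sum_mul, hcol j, one_mul]
  have e2 : ∑ i, ∑ j, B i j * c i = ∑ t, c t := by
    refine Finset.sum_congr rfl fun i _ => ?_
    rw [← Finset.sum_mul, hrow i, one_mul]
  have hzero : ∑ i, ∑ j, (-T / Z) * (B i j * (c j - c i)) = 0 := by
    have expand : ∑ i, ∑ j, (-T / Z) * (B i j * (c j - c i))
        = (-T / Z) * ((∑ i, ∑ j, B i j * c j) - ∑ i, ∑ j, B i j * c i) := by
      rw [mul_sub, Finset.mul_sum, Finset.mul_sum, ← Finset.sum_sub_distrib]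
      refine Finset.sum_congr rfl fun i _ => ?_
      rw [Finset.mul_sum, Finset.mul_sum, ← Finset.sum_sub_distrib]
      exact Finset.sum_congr rfl fun j _ => by ring
    rw [expand, e1, e2, sub_self, mul_zero]
  -- main chain
  show ∑ i, h i * (σ i i).re ≥ ∑ i, h i * (q i / Z)
  calc ∑ i, h i * (σ i i).re
      = ∑ i, ∑ j, h i * (B i j * (q j / Z)) := by
        refine Finset.sum_congr rfl fun i _ => ?_
        rw [hσii i, Finset.mul_sum]
    _ ≥ ∑ i, ∑ j, (B i j * (h i * (q i / Z)) + (-T / Z) * (B i j * (c j - c i))) := by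
        exact Finset.sum_le_sum fun i _ => Finset.sum_le_sum fun j _ => hterm i j
    _ = ∑ i, h i * (q i / Z) := by
        have split : ∑ i, ∑ j, (B i j * (h i * (q i / Z)) + (-T / Z) * (B i j * (c j - c i)))
            = (∑ i, ∑ j, B i j * (h i * (q i / Z)))
              + ∑ i, ∑ j, (-T / Z) * (B i j * (c j - c i)) := by
          rw [← Finset.sum_add_distrib]
          exact Finset.sum_congr rfl fun i _ => by rw [← Finset.sum_add_distrib]
        rw [split, hzero, add_zero]
        refine Finset.sum_congr rfl fun i _ => ?_
        rw [← Finset.sum_mul, hrow i, one_mul]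
end

section
/- Under the hypotheses of the edge free-energy inequality (σ = VρV† with ρ the Gibbs state at temperature T, chemical potential μ), the entropy changes satisfy T·ΔS := (ΔE − μΔN) ≥ 0; combining this for two independent subsystems (top and bottom edges, each with its own T, μ), if additionally ΔS_t = −ΔS_b (pumping entropy from one edge to the other), then ΔS_t = ΔS_b = 0. -/
open scoped ComplexOrder

open Matrix BigOperators


lemma exp_ineq (b c : ℝ) : Real.exp (-c) - Real.exp (-b) ≤ (b - c) * Real.exp (-c) := by
  have h := Real.add_one_le_exp (c - b)
  have h1 : Real.exp (c - b) * Real.exp (-c) = Real.exp (-b) := by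
    rw [← Real.exp_add]; ring_nf
  nlinarith [Real.exp_pos (-c), Real.exp_pos (-b)]

lemma gibbs_passive {I : Type*} [Fintype I] [DecidableEq I]
    (ε : I → ℝ) (T : ℝ) (hT : 0 < T) (Z : ℝ) (hZ : Z = ∑ j, Real.exp (-ε j / T))
    (ρ σ : Matrix I I ℂ)
    (hρ : ρ = Matrix.diagonal fun j => ((Real.exp (-ε j / T) / Z : ℝ) : ℂ))
    (hσ : ∃ V : Matrix I I ℂ, V ∈ Matrix.unitaryGroup I ℂ ∧ σ = V * ρ * Vᴴ) :
    0 ≤ ∑ j, ε j * ((σ j j).re - (ρ j j).re) := by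
  cases isEmpty_or_nonempty I with
  | inl h => simp
  | inr h =>
  obtain ⟨V, hV, rfl⟩ := hσ
  have hZpos : 0 < Z := by
    rw [hZ]; exact Finset.sum_pos (fun j _ => Real.exp_pos _) Finset.univ_nonempty
  set p : I → ℝ := fun j => Real.exp (-ε j / T) / Z with hp
  set f : I → I → ℝ := fun j k => Complex.normSq (V j k) with hf
  have hfnn : ∀ j k, 0 ≤ f j k := fun j k => Complex.normSq_nonneg _
  have hρd : ∀ j, (ρ j j).re = p j := by
    intro j; rw [hρ]; simp only [Matrix.diagonal_apply_eq, Complex.ofReal_re, hp]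
  have hσd : ∀ j, ((V * ρ * Vᴴ) j j).re = ∑ k, f j k * p k := by
    intro j
    rw [hρ, Matrix.mul_apply]
    have e : ∀ l, (V * Matrix.diagonal fun k => ((Real.exp (-ε k / T) / Z : ℝ) : ℂ)) j l * Vᴴ l j
        = ((f j l * p l : ℝ) : ℂ) := by
      intro l
      rw [Matrix.mul_diagonal, Matrix.conjTranspose_apply, Complex.star_def,
        mul_right_comm, Complex.mul_conj, hf, hp]
      push_cast
      ring
    simp only [e]
    rw [← Complex.ofReal_sum]
    simp
  have hrow : ∀ j, ∑ k, f j k = 1 := by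
    intro j
    have h1 : V * Vᴴ = 1 := by
      have := Matrix.mem_unitaryGroup_iff.mp hV
      simpa [Matrix.star_eq_conjTranspose] using this
    have h2 := congrArg (fun M => (M j j).re) h1
    simp only [Matrix.mul_apply, Matrix.one_apply_eq, Complex.one_re] at h2
    rw [← h2, Complex.re_sum]
    refine Finset.sum_congr rfl fun k _ => ?_
    rw [Matrix.conjTranspose_apply, Complex.star_def, Complex.mul_conj]
    simp [hf]
  have hcol : ∀ k, ∑ j, f j k = 1 := by
    intro k
    have h1 : Vᴴ * V = 1 := by
      have := Matrix.mem_unitaryGroup_iff'.mp hV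
      simpa [Matrix.star_eq_conjTranspose] using this
    have h2 := congrArg (fun M => (M k k).re) h1
    simp only [Matrix.mul_apply, Matrix.one_apply_eq, Complex.one_re] at h2
    rw [← h2, Complex.re_sum]
    refine Finset.sum_congr rfl fun j _ => ?_
    rw [Matrix.conjTranspose_apply, Complex.star_def, mul_comm, Complex.mul_conj]
    simp [hf]
  have hsum : ∑ j, ε j * (((V * ρ * Vᴴ) j j).re - (ρ j j).re)
      = ∑ j, ∑ k, f j k * (ε j - ε k) * p k := by
    have e1 : ∑ j, ε j * ((V * ρ * Vᴴ) j j).re = ∑ j, ∑ k, f j k * ε j * p k := by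
      refine Finset.sum_congr rfl fun j _ => ?_
      rw [hσd, Finset.mul_sum]
      exact Finset.sum_congr rfl fun k _ => by ring
    have e2 : ∑ j, ε j * (ρ j j).re = ∑ j, ∑ k, f j k * ε k * p k := by
      rw [Finset.sum_comm]
      refine Finset.sum_congr rfl fun k _ => ?_
      rw [hρd]
      rw [show ∑ j, f j k * ε k * p k = (∑ j, f j k) * (ε k * p k) by
        rw [Finset.sum_mul]; exact Finset.sum_congr rfl fun j _ => by ring]
      rw [hcol, one_mul]
    calc ∑ j, ε j * (((V * ρ * Vᴴ) j j).re - (ρ j j).re)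
        = ∑ j, (ε j * ((V * ρ * Vᴴ) j j).re - ε j * (ρ j j).re) := by
          exact Finset.sum_congr rfl fun j _ => by ring
      _ = ∑ j, ε j * ((V * ρ * Vᴴ) j j).re - ∑ j, ε j * (ρ j j).re := Finset.sum_sub_distrib _ _
      _ = ∑ j, ∑ k, f j k * ε j * p k - ∑ j, ∑ k, f j k * ε k * p k := by rw [e1, e2]
      _ = ∑ j, ∑ k, f j k * (ε j - ε k) * p k := by
          rw [← Finset.sum_sub_distrib]
          refine Finset.sum_congr rfl fun j _ => ?_
          rw [← Finset.sum_sub_distrib]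
          exact Finset.sum_congr rfl fun k _ => by ring
  rw [hsum]
  have hlb : ∀ j k, f j k * (T / Z) * (Real.exp (-ε k / T) - Real.exp (-ε j / T))
      ≤ f j k * (ε j - ε k) * p k := by
    intro j k
    have key := exp_ineq (ε j / T) (ε k / T)
    have h3 : Real.exp (-ε k / T) - Real.exp (-ε j / T) ≤ (ε j - ε k) / T * Real.exp (-ε k / T) := by
      rw [neg_div, neg_div]
      calc Real.exp (-(ε k / T)) - Real.exp (-(ε j / T))
          ≤ (ε j / T - ε k / T) * Real.exp (-(ε k / T)) := key
        _ = (ε j - ε k) / T * Real.exp (-(ε k / T)) := by ring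
    have h4 : (T / Z) * (Real.exp (-ε k / T) - Real.exp (-ε j / T)) ≤ (ε j - ε k) * p k := by
      have h5 := mul_le_mul_of_nonneg_left h3 (le_of_lt (div_pos hT hZpos))
      calc (T / Z) * (Real.exp (-ε k / T) - Real.exp (-ε j / T))
          ≤ (T / Z) * ((ε j - ε k) / T * Real.exp (-ε k / T)) := h5
        _ = (ε j - ε k) * p k := by
            rw [hp]; field_simp
    calc f j k * (T / Z) * (Real.exp (-ε k / T) - Real.exp (-ε j / T))
        = f j k * ((T / Z) * (Real.exp (-ε k / T) - Real.exp (-ε j / T))) := by ring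
      _ ≤ f j k * ((ε j - ε k) * p k) := mul_le_mul_of_nonneg_left h4 (hfnn j k)
      _ = f j k * (ε j - ε k) * p k := by ring
  have hlow : ∑ j, ∑ k, f j k * (T / Z) * (Real.exp (-ε k / T) - Real.exp (-ε j / T))
      ≤ ∑ j, ∑ k, f j k * (ε j - ε k) * p k :=
    Finset.sum_le_sum fun j _ => Finset.sum_le_sum fun k _ => hlb j k
  refine le_trans (le_of_eq ?_) hlow
  have t1 : ∑ j, ∑ k, f j k * Real.exp (-ε k / T) = Z := by
    rw [Finset.sum_comm]
    calc ∑ k, ∑ j, f j k * Real.exp (-ε k / T)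
        = ∑ k, (∑ j, f j k) * Real.exp (-ε k / T) := by
          exact Finset.sum_congr rfl fun k _ => (Finset.sum_mul ..).symm
      _ = ∑ k, Real.exp (-ε k / T) := by
          exact Finset.sum_congr rfl fun k _ => by rw [hcol, one_mul]
      _ = Z := hZ.symm
  have t2 : ∑ j, ∑ k, f j k * Real.exp (-ε j / T) = Z := by
    calc ∑ j, ∑ k, f j k * Real.exp (-ε j / T)
        = ∑ j, (∑ k, f j k) * Real.exp (-ε j / T) := by
          exact Finset.sum_congr rfl fun j _ => (Finset.sum_mul ..).symm
      _ = ∑ j, Real.exp (-ε j / T) := by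
          exact Finset.sum_congr rfl fun j _ => by rw [hrow, one_mul]
      _ = Z := hZ.symm
  calc (0 : ℝ) = (T / Z) * (∑ j, ∑ k, f j k * Real.exp (-ε k / T))
        - (T / Z) * (∑ j, ∑ k, f j k * Real.exp (-ε j / T)) := by rw [t1, t2, sub_self]
    _ = ∑ j, ∑ k, f j k * (T / Z) * (Real.exp (-ε k / T) - Real.exp (-ε j / T)) := by
        rw [Finset.mul_sum, Finset.mul_sum, ← Finset.sum_sub_distrib]
        refine Finset.sum_congr rfl fun j _ => ?_
        rw [Finset.mul_sum, Finset.mul_sum, ← Finset.sum_sub_distrib]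
        exact Finset.sum_congr rfl fun k _ => by ring


/-- No Thouless pump for entropy: for two independent edges, each in a grand canonical
Gibbs state transformed by a spectrum-preserving (unitary) map, the entropy changes
`ΔS = (ΔE − μΔN)/T` of both edges are non-negative; if moreover `ΔS_t = −ΔS_b` (entropy is
pumped from one edge to the other), then both entropy changes vanish. -/
theorem no_entropy_thouless_pump
    {It Ib : Type*} [Fintype It] [DecidableEq It] [Fintype Ib] [DecidableEq Ib]
    (Et Nt : It → ℝ) (μt Tt : ℝ) (hTt : 0 < Tt)
    (Eb Nb : Ib → ℝ) (μb Tb : ℝ) (hTb : 0 < Tb)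
    (Zt : ℝ) (hZt : Zt = ∑ j, Real.exp (-(Et j - μt * Nt j) / Tt))
    (Zb : ℝ) (hZb : Zb = ∑ i, Real.exp (-(Eb i - μb * Nb i) / Tb))
    (ρt : Matrix It It ℂ)
    (hρt : ρt = Matrix.diagonal fun j => ((Real.exp (-(Et j - μt * Nt j) / Tt) / Zt : ℝ) : ℂ))
    (ρb : Matrix Ib Ib ℂ)
    (hρb : ρb = Matrix.diagonal fun i => ((Real.exp (-(Eb i - μb * Nb i) / Tb) / Zb : ℝ) : ℂ))
    (σt : Matrix It It ℂ)
    (hσt : ∃ V : Matrix It It ℂ, V ∈ Matrix.unitaryGroup It ℂ ∧ σt = V * ρt * Vᴴ)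
    (σb : Matrix Ib Ib ℂ)
    (hσb : ∃ V : Matrix Ib Ib ℂ, V ∈ Matrix.unitaryGroup Ib ℂ ∧ σb = V * ρb * Vᴴ)
    (ΔSt ΔSb : ℝ)
    (hΔSt : ΔSt = (∑ j, (Et j - μt * Nt j) * ((σt j j).re - (ρt j j).re)) / Tt)
    (hΔSb : ΔSb = (∑ i, (Eb i - μb * Nb i) * ((σb i i).re - (ρb i i).re)) / Tb) :
    0 ≤ ΔSt ∧ 0 ≤ ΔSb ∧ (ΔSt = -ΔSb → ΔSt = 0 ∧ ΔSb = 0) := by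
  have ht : 0 ≤ ∑ j, (Et j - μt * Nt j) * ((σt j j).re - (ρt j j).re) :=
    gibbs_passive (fun j => Et j - μt * Nt j) Tt hTt Zt hZt ρt σt hρt hσt
  have hb : 0 ≤ ∑ i, (Eb i - μb * Nb i) * ((σb i i).re - (ρb i i).re) :=
    gibbs_passive (fun i => Eb i - μb * Nb i) Tb hTb Zb hZb ρb σb hρb hσb
  have h1 : 0 ≤ ΔSt := hΔSt ▸ div_nonneg ht hTt.le
  have h2 : 0 ≤ ΔSb := hΔSb ▸ div_nonneg hb hTb.le
  exact ⟨h1, h2, fun hpump => ⟨by linarith, by linarith⟩⟩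
end
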